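/- Let n be a positive even natural number and let σ be a permutation of Fin n that has a cycle C of length s with s > n/2. If every player uses the pointer-following strategy with n/2 openings (a_i 0 = i, a_i (j+1) = σ⁻¹(a_i j); player i wins iff σ(i) ∈ {a_i 0, …, a_i (n/2 − 1)}), then player i loses if and only if i ∈ C; i.e. exactly the s players lying on the long cycle fail and all other players win. -/

import Mathlib

/-- The orbit (cycle) of `i` under the permutation `σ` of `Fin n`, as a finset.
For `n ≥ 1` the powers `σ^0, …, σ^(n-1)` applied to `i` exhaust the orbit. -/
def cycleOf {n : ℕ} (σ : Equiv.Perm (Fin n)) (i : Fin n) : Finset (Fin n) :=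
  (Finset.range n).image (fun k => (σ ^ k) i)

/-- The lockers opened by player `i` using the pointer-following strategy:
`a_i 0 = i` and `a_i (j+1) = σ⁻¹ (a_i j)`, i.e. `a_i j = (σ⁻¹)^j i`. -/
def opened {n : ℕ} (σ : Equiv.Perm (Fin n)) (i : Fin n) (j : ℕ) : Fin n :=
  (σ.symm ^ j) i

/-- Let `n` be even and positive, and let `σ` be a permutation of `Fin n` having a cycle
`C` of length `s > n/2`.  If every player uses the pointer-following strategy with `n/2`
openings, then player `i` loses (never opens the locker `σ i` containing his label) if
and only if `i ∈ C`: exactly the `s` players on the long cycle fail, all others win. -/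
theorem cheating_referee_long_cycle_losers (n : ℕ) (hn : 0 < n) (hne : Even n)
    (σ : Equiv.Perm (Fin n)) (C : Finset (Fin n)) (s : ℕ)
    (hC : ∃ i₀ : Fin n, C = cycleOf σ i₀) (hcard : C.card = s) (hs : n / 2 < s) :
    ∀ i : Fin n,
      (σ i ∉ (Finset.range (n / 2)).image (opened σ i)) ↔ i ∈ C := by
  obtain ⟨i₀, rfl⟩ := hC
  set m : Fin n → ℕ := fun i => Function.minimalPeriod (⇑σ) i with hm
  have hper : ∀ i : Fin n, i ∈ Function.periodicPts (⇑σ) := by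
    intro i
    exact ⟨orderOf σ, orderOf_pos σ, by
      show (⇑σ)^[orderOf σ] i = i
      rw [Equiv.Perm.iterate_eq_pow, pow_orderOf_eq_one]; rfl⟩
  have hmpos : ∀ i : Fin n, 0 < m i := fun i =>
    Function.minimalPeriod_pos_of_mem_periodicPts (hper i)
  have hmod : ∀ (i : Fin n) (k : ℕ), (σ ^ (k % m i)) i = (σ ^ k) i := by
    intro i k
    exact Function.iterate_mod_minimalPeriod_eq (f := ⇑σ) (x := i) (n := k)
  have hinj : ∀ i : Fin n, Set.InjOn (fun k => (σ ^ k) i) (Set.Iio (m i)) := by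
    intro i
    have := Function.iterate_injOn_Iio_minimalPeriod (f := ⇑σ) (x := i)
    simp only [Equiv.Perm.iterate_eq_pow] at this; exact this
  have hmn : ∀ i : Fin n, m i ≤ n := by
    intro i
    have h := Finset.card_le_card_of_injOn (fun k => (σ ^ k) i)
      (fun _ _ => Finset.mem_univ _)
      (fun a ha b hb hab => hinj i (Finset.mem_range.mp (Finset.mem_coe.mp ha))
        (Finset.mem_range.mp (Finset.mem_coe.mp hb)) hab)
      (s := Finset.range (m i)) (t := Finset.univ)
    simpa using h
  have hmem : ∀ i x : Fin n, x ∈ cycleOf σ i ↔ ∃ k, (σ ^ k) i = x := by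
    intro i x
    constructor
    · rintro hx
      obtain ⟨k, -, hk⟩ := Finset.mem_image.mp hx
      exact ⟨k, hk⟩
    · rintro ⟨k, rfl⟩
      exact Finset.mem_image.mpr ⟨k % m i, Finset.mem_range.mpr
        (lt_of_lt_of_le (Nat.mod_lt _ (hmpos i)) (hmn i)), hmod i k⟩
  have hself : ∀ i : Fin n, i ∈ cycleOf σ i := fun i =>
    (hmem i i).mpr ⟨0, rfl⟩
  have hsymm : ∀ i x : Fin n, x ∈ cycleOf σ i → i ∈ cycleOf σ x := by
    intro i x hx
    obtain ⟨k, rfl⟩ := (hmem i x).mp hx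
    refine (hmem _ i).mpr ⟨k * (m i - 1), ?_⟩
    have h1 : (σ ^ (k * (m i - 1))) ((σ ^ k) i) = (σ ^ (k * (m i - 1) + k)) i := by
      rw [pow_add, Equiv.Perm.mul_apply]
    have h2 : k * (m i - 1) + k = k * m i := by
      have hp := hmpos i
      calc k * (m i - 1) + k = k * (m i - 1 + 1) := by ring
        _ = k * m i := by rw [Nat.sub_add_cancel hp]
    have h3 : (σ ^ (k * m i)) i = i := by
      have := (Function.isPeriodicPt_minimalPeriod (⇑σ) i).const_mul k
      exact this
    rw [h1, h2, h3]
  have heq : ∀ i x : Fin n, x ∈ cycleOf σ i → cycleOf σ x = cycleOf σ i := by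
    intro i x hx
    obtain ⟨k, rfl⟩ := (hmem i x).mp hx
    ext y
    rw [hmem, hmem]
    constructor
    · rintro ⟨t, rfl⟩
      exact ⟨t + k, by rw [pow_add, Equiv.Perm.mul_apply]⟩
    · rintro ⟨t, rfl⟩
      obtain ⟨u, hu⟩ := (hmem _ i).mp (hsymm i _ hx)
      exact ⟨t + u, by rw [pow_add, Equiv.Perm.mul_apply, hu]⟩
  have hcardeq : ∀ i : Fin n, (cycleOf σ i).card = m i := by
    intro i
    have h1 : cycleOf σ i = (Finset.range (m i)).image (fun k => (σ ^ k) i) := by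
      ext x
      rw [hmem]
      constructor
      · rintro ⟨k, rfl⟩
        exact Finset.mem_image.mpr ⟨k % m i, Finset.mem_range.mpr
          (Nat.mod_lt _ (hmpos i)), hmod i k⟩
      · rintro hx
        obtain ⟨k, -, hk⟩ := Finset.mem_image.mp hx
        exact ⟨k, hk⟩
    rw [h1, Finset.card_image_of_injOn (fun a ha b hb hab =>
      hinj i (Finset.mem_range.mp ha) (Finset.mem_range.mp hb) hab),
      Finset.card_range]
  -- win condition
  have hwin : ∀ i : Fin n,
      (σ i ∈ (Finset.range (n / 2)).image (opened σ i)) ↔ m i ≤ n / 2 := by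
    intro i
    have key : ∀ j : ℕ, opened σ i j = σ i ↔ (σ ^ (j + 1)) i = i := by
      intro j
      unfold opened
      rw [← Equiv.Perm.inv_def, inv_pow]
      constructor
      · intro h
        have : (σ ^ j) ((σ ^ j)⁻¹ i) = (σ ^ j) (σ i) := by rw [h]
        rw [Equiv.Perm.inv_def, Equiv.apply_symm_apply] at this
        rw [pow_succ, Equiv.Perm.mul_apply, ← this]
      · intro h
        have : (σ ^ j)⁻¹ ((σ ^ (j + 1)) i) = (σ ^ j)⁻¹ i := by rw [h]
        rw [pow_succ, Equiv.Perm.mul_apply] at this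
        rw [← this, Equiv.Perm.inv_def, Equiv.symm_apply_apply]
    constructor
    · intro hx
      obtain ⟨j, hj, hjx⟩ := Finset.mem_image.mp hx
      have hj' := Finset.mem_range.mp hj
      have hdvd : m i ∣ j + 1 := by
        apply Function.IsPeriodicPt.minimalPeriod_dvd
        show (⇑σ)^[j + 1] i = i
        rw [Equiv.Perm.iterate_eq_pow]; exact (key j).mp hjx
      have := Nat.le_of_dvd (Nat.succ_pos j) hdvd
      omega
    · intro hle
      refine Finset.mem_image.mpr ⟨m i - 1, Finset.mem_range.mpr (by
        have := hmpos i; omega), ?_⟩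
      rw [key]
      have h1 : m i - 1 + 1 = m i := by have := hmpos i; omega
      rw [h1]
      have := Function.isPeriodicPt_minimalPeriod (⇑σ) i
      rw [← Equiv.Perm.iterate_eq_pow]; exact this
  -- main
  intro i
  have h2 : n / 2 + n / 2 = n := by
    obtain ⟨t, rfl⟩ := hne; omega
  constructor
  · intro hlose
    by_contra hiC
    have hbig : n / 2 < m i := by
      by_contra h
      exact hlose ((hwin i).mpr (by omega))
    -- disjoint orbits
    have hdisj : Disjoint (cycleOf σ i) (cycleOf σ i₀) := by
      rw [Finset.disjoint_left]
      intro z hz1 hz2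
      apply hiC
      rw [← heq i₀ z hz2, heq i z hz1]
      exact hself i
    have hcards : (cycleOf σ i).card + (cycleOf σ i₀).card ≤ n := by
      have := Finset.card_union_of_disjoint hdisj
      have hle : (cycleOf σ i ∪ cycleOf σ i₀).card ≤ (Finset.univ : Finset (Fin n)).card :=
        Finset.card_le_card (Finset.subset_univ _)
      simp only [Finset.card_univ, Fintype.card_fin] at hle
      omega
    rw [hcardeq, hcard] at hcards
    omega
  · intro hiC
    have : cycleOf σ i = cycleOf σ i₀ := heq i₀ i hiC
    have hmi : m i = s := by rw [← hcardeq i, this, hcard]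
    intro hwin'
    have := (hwin i).mp hwin'
    omega
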